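/- Let G be a finite set of C¹ diffeomorphisms of ℝ, closed under taking inverses, with every g ∈ G having everywhere positive derivative. Let ε > 0, let g ∈ G, and let x ∈ ℝ with λ_*(x) = 0, and set y = g(x). Then the series g_ε(x) = Σ_{n=0}^∞ e^{−nε}·μ_n(x) and g_ε(y) = Σ_{n=0}^∞ e^{−nε}·μ_n(y) both converge, and e^{−ε}·g_ε(x) ≤ g'(x)·g_ε(y) ≤ e^{ε}·g_ε(x). -/

import Mathlib

/-- Composition of a list of maps: the list `[g_k, …, g₁]` composes to `g_k ∘ ⋯ ∘ g₁`
(the empty list gives the identity map). -/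
def wordComp (w : List (ℝ → ℝ)) : ℝ → ℝ := w.foldr (· ∘ ·) id

/-- A word in `G` is a finite list of elements of `G`. -/
def IsWord (G : Finset (ℝ → ℝ)) (w : List (ℝ → ℝ)) : Prop := ∀ g ∈ w, g ∈ G

/-- The maximal `n`-expansion `μ_n(x)`. -/
noncomputable def maxExp (G : Finset (ℝ → ℝ)) (n : ℕ) (x : ℝ) : ℝ :=
  sSup {d : ℝ | ∃ w : List (ℝ → ℝ), IsWord G w ∧ w.length ≤ n ∧ d = deriv (wordComp w) x}

/-- The transverse expansion exponent `λ_*(x) = limsup_n log(μ_n(x))/n`, in `[0,∞]`. -/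
noncomputable def expExponent (G : Finset (ℝ → ℝ)) (x : ℝ) : ENNReal :=
  Filter.limsup (fun n : ℕ => ENNReal.ofReal (Real.log (maxExp G n x) / n)) Filter.atTop

namespace LGaux

def Sset (G : Finset (ℝ → ℝ)) (n : ℕ) (x : ℝ) : Set ℝ :=
  {d : ℝ | ∃ w : List (ℝ → ℝ), IsWord G w ∧ w.length ≤ n ∧ d = deriv (wordComp w) x}

lemma maxExp_eq (G : Finset (ℝ → ℝ)) (n : ℕ) (x : ℝ) : maxExp G n x = sSup (Sset G n x) := rfl

lemma wordComp_cons (g : ℝ → ℝ) (w : List (ℝ → ℝ)) : wordComp (g :: w) = g ∘ wordComp w := rfl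

lemma wordComp_append (u v : List (ℝ → ℝ)) :
    wordComp (u ++ v) = wordComp u ∘ wordComp v := by
  induction u with
  | nil => rfl
  | cons g u ih => simp [wordComp_cons, ih, Function.comp_assoc]

lemma wordComp_differentiable {G : Finset (ℝ → ℝ)} (hC1 : ∀ g ∈ G, ContDiff ℝ 1 g)
    {w : List (ℝ → ℝ)} (hw : IsWord G w) : Differentiable ℝ (wordComp w) := by
  induction w with
  | nil => exact differentiable_id
  | cons g u ih =>
      rw [wordComp_cons]
      exact ((hC1 g (hw g (by simp))).differentiable one_ne_zero).comp
        (ih fun a ha => hw a (by simp [ha]))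

lemma Sset_finite (G : Finset (ℝ → ℝ)) (n : ℕ) (x : ℝ) : (Sset G n x).Finite := by
  have hsub : Sset G n x ⊆
      (fun w : List {g : ℝ → ℝ // g ∈ G} => deriv (wordComp (w.map Subtype.val)) x) ''
        {w : List {g : ℝ → ℝ // g ∈ G} | w.length ≤ n} := by
    rintro d ⟨w, hw, hlen, rfl⟩
    refine ⟨w.pmap (fun g hg => (⟨g, hg⟩ : {g : ℝ → ℝ // g ∈ G})) hw, List.length_pmap.trans_le hlen, ?_⟩
    exact congrArg (fun l => deriv (wordComp l) x)
      ((List.map_pmap hw).trans ((List.pmap_eq_map hw).trans (List.map_id w)))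
  exact Set.Finite.subset (Set.Finite.image _ (List.finite_length_le _ n)) hsub

lemma Sset_nonempty (G : Finset (ℝ → ℝ)) (n : ℕ) (x : ℝ) : (Sset G n x).Nonempty :=
  ⟨deriv (wordComp []) x, [], fun g h => by simp at h, by simp, rfl⟩

lemma one_mem_Sset (G : Finset (ℝ → ℝ)) (n : ℕ) (x : ℝ) : (1 : ℝ) ∈ Sset G n x :=
  ⟨[], fun g h => by simp at h, by simp, by simp [wordComp, deriv_id]⟩

lemma one_le_maxExp (G : Finset (ℝ → ℝ)) (n : ℕ) (x : ℝ) : 1 ≤ maxExp G n x :=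
  le_csSup (Sset_finite G n x).bddAbove (one_mem_Sset G n x)

lemma maxExp_nonneg (G : Finset (ℝ → ℝ)) (n : ℕ) (x : ℝ) : 0 ≤ maxExp G n x :=
  le_trans zero_le_one (one_le_maxExp G n x)

/-- key inequality: `g'(x) · μ_n(g x) ≤ μ_{n+1}(x)` -/
lemma key (G : Finset (ℝ → ℝ)) (hC1 : ∀ g ∈ G, ContDiff ℝ 1 g)
    (hpos : ∀ g ∈ G, ∀ y : ℝ, 0 < deriv g y)
    {g : ℝ → ℝ} (hg : g ∈ G) (n : ℕ) (x : ℝ) :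
    deriv g x * maxExp G n (g x) ≤ maxExp G (n + 1) x := by
  have hgx : 0 < deriv g x := hpos g hg x
  rw [mul_comm, ← le_div_iff₀ hgx, maxExp_eq]
  refine csSup_le (Sset_nonempty G n (g x)) ?_
  rintro d ⟨u, hu, hlen, rfl⟩
  rw [le_div_iff₀ hgx]
  have hmem : deriv (wordComp u) (g x) * deriv g x ∈ Sset G (n + 1) x := by
    refine ⟨u ++ [g], ?_, by simp [hlen], ?_⟩
    · intro a ha
      rcases List.mem_append.1 ha with h | h
      · exact hu a h
      · simp at h; subst h; exact hg
    · rw [wordComp_append]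
      have h1 : wordComp [g] = g := by
        funext z; rfl
      rw [h1, deriv_comp x ((wordComp_differentiable hC1 hu).differentiableAt)
        (((hC1 g hg).differentiable one_ne_zero).differentiableAt)]
  exact le_csSup (Sset_finite G (n + 1) x).bddAbove hmem

end LGaux

/-- Tempering estimate for the Lyapunov gauge function `g_ε(x) = Σ e^{-nε} μ_n(x)`:
at a point `x` with `λ_*(x) = 0` and for a generator `g ∈ G` with `y = g(x)`, both
series converge and `e^{-ε} g_ε(x) ≤ g'(x) · g_ε(y) ≤ e^{ε} g_ε(x)`. -/
theorem lyapunov_gauge_tempered_along_generator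
    (G : Finset (ℝ → ℝ))
    (hC1 : ∀ g ∈ G, ContDiff ℝ 1 g)
    (hpos : ∀ g ∈ G, ∀ y : ℝ, 0 < deriv g y)
    (hinv : ∀ g ∈ G, ∃ h ∈ G, (∀ x : ℝ, h (g x) = x) ∧ (∀ x : ℝ, g (h x) = x))
    (ε : ℝ) (hε : 0 < ε) (g : ℝ → ℝ) (hg : g ∈ G)
    (x : ℝ) (hx : expExponent G x = 0) :
    Summable (fun n : ℕ => Real.exp (-(n : ℝ) * ε) * maxExp G n x) ∧
    Summable (fun n : ℕ => Real.exp (-(n : ℝ) * ε) * maxExp G n (g x)) ∧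
    Real.exp (-ε) * (∑' n : ℕ, Real.exp (-(n : ℝ) * ε) * maxExp G n x) ≤
      deriv g x * (∑' n : ℕ, Real.exp (-(n : ℝ) * ε) * maxExp G n (g x)) ∧
    deriv g x * (∑' n : ℕ, Real.exp (-(n : ℝ) * ε) * maxExp G n (g x)) ≤
      Real.exp ε * (∑' n : ℕ, Real.exp (-(n : ℝ) * ε) * maxExp G n x) := by
  classical
  obtain ⟨h, hh, hhg, hgh⟩ := hinv g hg
  set fx : ℕ → ℝ := fun n => Real.exp (-(n : ℝ) * ε) * maxExp G n x with hfx
  set fy : ℕ → ℝ := fun n => Real.exp (-(n : ℝ) * ε) * maxExp G n (g x) with hfy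
  have hgx : (0 : ℝ) < deriv g x := hpos g hg x
  -- derivative of inverse
  have hder : deriv h (g x) * deriv g x = 1 := by
    have hid : h ∘ g = (id : ℝ → ℝ) := funext hhg
    have := deriv_comp x (((hC1 h hh).differentiable one_ne_zero).differentiableAt)
      (((hC1 g hg).differentiable one_ne_zero).differentiableAt)
    rw [hid, deriv_id] at this
    exact this.symm
  -- key inequalities
  have key1 : ∀ n : ℕ, deriv g x * maxExp G n (g x) ≤ maxExp G (n + 1) x :=
    fun n => LGaux.key G hC1 hpos hg n x
  have key2 : ∀ n : ℕ, maxExp G n x ≤ deriv g x * maxExp G (n + 1) (g x) := by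
    intro n
    have := LGaux.key G hC1 hpos hh n (g x)
    rw [hhg x] at this
    have h2 := mul_le_mul_of_nonneg_left this hgx.le
    calc maxExp G n x = deriv g x * (deriv h (g x) * maxExp G n x) := by
          rw [← mul_assoc, mul_comm (deriv g x), hder, one_mul]
      _ ≤ deriv g x * maxExp G (n + 1) (g x) := h2
  have hfxnn : ∀ n, 0 ≤ fx n := fun n =>
    mul_nonneg (Real.exp_nonneg _) (LGaux.maxExp_nonneg G n x)
  have hfynn : ∀ n, 0 ≤ fy n := fun n =>
    mul_nonneg (Real.exp_nonneg _) (LGaux.maxExp_nonneg G n (g x))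
  -- growth estimate from λ_* = 0
  have hev : ∀ᶠ n : ℕ in Filter.atTop, maxExp G n x ≤ Real.exp ((n : ℝ) * (ε / 2)) := by
    have hlt : Filter.limsup
        (fun n : ℕ => ENNReal.ofReal (Real.log (maxExp G n x) / n)) Filter.atTop
        < ENNReal.ofReal (ε / 2) := by
      rw [show Filter.limsup
          (fun n : ℕ => ENNReal.ofReal (Real.log (maxExp G n x) / n)) Filter.atTop = 0 from hx]
      exact ENNReal.ofReal_pos.2 (half_pos hε)
    have h1 := Filter.eventually_lt_of_limsup_lt hlt
    filter_upwards [h1, Filter.eventually_ge_atTop 1] with n h1 h2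
    have hn : (0 : ℝ) < n := by exact_mod_cast h2
    have h3 : Real.log (maxExp G n x) / n < ε / 2 :=
      (ENNReal.ofReal_lt_ofReal_iff (half_pos hε)).1 h1
    have h4 : Real.log (maxExp G n x) < (n : ℝ) * (ε / 2) := by
      rw [div_lt_iff₀ hn] at h3; linarith
    have h5 : 0 < maxExp G n x :=
      lt_of_lt_of_le zero_lt_one (LGaux.one_le_maxExp G n x)
    calc maxExp G n x = Real.exp (Real.log (maxExp G n x)) := (Real.exp_log h5).symm
      _ ≤ Real.exp ((n : ℝ) * (ε / 2)) := Real.exp_le_exp.2 h4.le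
  obtain ⟨N, hN⟩ := Filter.eventually_atTop.1 hev
  -- summability at x
  have hsumx : Summable fx := by
    rw [← summable_nat_add_iff N]
    have hgeo : Summable (fun n : ℕ =>
        Real.exp (-(N : ℝ) * (ε / 2)) * Real.exp (-(ε / 2)) ^ n) :=
      (summable_geometric_of_lt_one (Real.exp_nonneg _)
        (Real.exp_lt_one_iff.2 (by linarith))).mul_left _
    refine Summable.of_nonneg_of_le (fun n => hfxnn (n + N)) (fun n => ?_) hgeo
    have hb : maxExp G (n + N) x ≤ Real.exp (((n + N : ℕ) : ℝ) * (ε / 2)) :=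
      hN (n + N) (Nat.le_add_left N n)
    have hkey : fx (n + N) ≤ Real.exp (-((n + N : ℕ) : ℝ) * ε) *
        Real.exp (((n + N : ℕ) : ℝ) * (ε / 2)) :=
      mul_le_mul_of_nonneg_left hb (Real.exp_nonneg _)
    refine hkey.trans (le_of_eq ?_)
    rw [← Real.exp_add, ← Real.exp_nat_mul, ← Real.exp_add]
    congr 1
    push_cast
    ring
  -- summability at y = g x
  have hsumy : Summable fy := by
    have hS : Summable (fun n : ℕ => (Real.exp ε / deriv g x) * fx (n + 1)) :=
      ((summable_nat_add_iff 1).2 hsumx).mul_left _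
    refine Summable.of_nonneg_of_le hfynn (fun n => ?_) hS
    have h1 : maxExp G n (g x) ≤ maxExp G (n + 1) x / deriv g x := by
      rw [le_div_iff₀ hgx, mul_comm]; exact key1 n
    have h2 : fy n ≤ Real.exp (-(n : ℝ) * ε) * (maxExp G (n + 1) x / deriv g x) :=
      mul_le_mul_of_nonneg_left h1 (Real.exp_nonneg _)
    refine h2.trans (le_of_eq ?_)
    have hexp : Real.exp ε * Real.exp (-(((n : ℕ) + 1 : ℕ) : ℝ) * ε)
        = Real.exp (-(n : ℝ) * ε) := by
      rw [← Real.exp_add]; congr 1; push_cast; ring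
    rw [hfx]; dsimp only
    rw [← hexp]
    ring
  refine ⟨hsumx, hsumy, ?_, ?_⟩
  · -- lower bound
    have hterm : ∀ n : ℕ, Real.exp (-ε) * fx n ≤ deriv g x * fy (n + 1) := by
      intro n
      have hexp : Real.exp (-ε) * Real.exp (-(n : ℝ) * ε)
          = Real.exp (-(((n : ℕ) + 1 : ℕ) : ℝ) * ε) := by
        rw [← Real.exp_add]; congr 1; push_cast; ring
      calc Real.exp (-ε) * fx n
          = Real.exp (-(((n : ℕ) + 1 : ℕ) : ℝ) * ε) * maxExp G n x := by
            rw [hfx]; dsimp only; rw [← mul_assoc, hexp]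
        _ ≤ Real.exp (-(((n : ℕ) + 1 : ℕ) : ℝ) * ε)
            * (deriv g x * maxExp G (n + 1) (g x)) :=
            mul_le_mul_of_nonneg_left (key2 n) (Real.exp_nonneg _)
        _ = deriv g x * fy (n + 1) := by rw [hfy]; dsimp only; ring
    calc Real.exp (-ε) * (∑' n : ℕ, fx n) = ∑' n : ℕ, Real.exp (-ε) * fx n :=
          (tsum_mul_left).symm
      _ ≤ ∑' n : ℕ, deriv g x * fy (n + 1) :=
          Summable.tsum_le_tsum hterm (hsumx.mul_left _) (((summable_nat_add_iff 1).2 hsumy).mul_left _)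
      _ = deriv g x * ∑' n : ℕ, fy (n + 1) := tsum_mul_left
      _ ≤ deriv g x * (∑' n : ℕ, fy n) := by
          refine mul_le_mul_of_nonneg_left ?_ hgx.le
          rw [Summable.tsum_eq_zero_add hsumy]
          exact le_add_of_nonneg_left (hfynn 0)
  · -- upper bound
    have hterm : ∀ n : ℕ, deriv g x * fy n ≤ Real.exp ε * fx (n + 1) := by
      intro n
      have hexp : Real.exp ε * Real.exp (-(((n : ℕ) + 1 : ℕ) : ℝ) * ε)
          = Real.exp (-(n : ℝ) * ε) := by
        rw [← Real.exp_add]; congr 1; push_cast; ring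
      calc deriv g x * fy n
          = Real.exp (-(n : ℝ) * ε) * (deriv g x * maxExp G n (g x)) := by
            rw [hfy]; dsimp only; ring
        _ ≤ Real.exp (-(n : ℝ) * ε) * maxExp G (n + 1) x :=
            mul_le_mul_of_nonneg_left (key1 n) (Real.exp_nonneg _)
        _ = Real.exp ε * fx (n + 1) := by
            rw [hfx]; dsimp only; rw [← mul_assoc, hexp]
    calc deriv g x * (∑' n : ℕ, fy n) = ∑' n : ℕ, deriv g x * fy n := (tsum_mul_left).symm
      _ ≤ ∑' n : ℕ, Real.exp ε * fx (n + 1) :=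
          Summable.tsum_le_tsum hterm (hsumy.mul_left _) (((summable_nat_add_iff 1).2 hsumx).mul_left _)
      _ = Real.exp ε * ∑' n : ℕ, fx (n + 1) := tsum_mul_left
      _ ≤ Real.exp ε * (∑' n : ℕ, fx n) := by
          refine mul_le_mul_of_nonneg_left ?_ (Real.exp_nonneg _)
          rw [Summable.tsum_eq_zero_add hsumx]
          exact le_add_of_nonneg_left (hfxnn 0)
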